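/- Let G = (V,E) be a finite simple graph, let x ≥ 0 be an integer, and let I° be an independent set of the subdivided graph G^x. Then G contains an independent set I with |I| ≥ |I°| − x·|E|. -/

import Mathlib

open scoped Classical

/-- The vertex set of the `(2x+1)`-subdivision `G^x` of `G`: the original vertices
together with, for each edge of `G` (recorded as the ordered pair `(u, v)` with
`u < v` and `G.Adj u v`), the `2x` internal path vertices. -/
abbrev SubVert {V : Type} [LinearOrder V] (G : SimpleGraph V) (x : ℕ) : Type :=
  V ⊕ {p : V × V × Fin (2 * x) // p.1 < p.2.1 ∧ G.Adj p.1 p.2.1}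

/-- The `(2x+1)`-subdivision `G^x` of `G`: each edge `{u, v}` of `G` is replaced by the
path `(u, w_{e,1}, …, w_{e,2x}, v)` of length `2x+1` through `2x` new internal vertices
(in particular `G^0 = G`). -/
def Subdiv {V : Type} [LinearOrder V] (G : SimpleGraph V) (x : ℕ) :
    SimpleGraph (SubVert G x) where
  Adj a b :=
    match a, b with
    | Sum.inl u, Sum.inl v => x = 0 ∧ G.Adj u v
    | Sum.inl a, Sum.inr p =>
        (a = p.1.1 ∧ (p.1.2.2 : ℕ) = 0) ∨ (a = p.1.2.1 ∧ (p.1.2.2 : ℕ) = 2 * x - 1)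
    | Sum.inr p, Sum.inl a =>
        (a = p.1.1 ∧ (p.1.2.2 : ℕ) = 0) ∨ (a = p.1.2.1 ∧ (p.1.2.2 : ℕ) = 2 * x - 1)
    | Sum.inr p, Sum.inr q =>
        p.1.1 = q.1.1 ∧ p.1.2.1 = q.1.2.1 ∧
          ((p.1.2.2 : ℕ) + 1 = (q.1.2.2 : ℕ) ∨ (q.1.2.2 : ℕ) + 1 = (p.1.2.2 : ℕ))
  symm := by
    constructor
    rintro (u | p) (v | q) h
    · exact ⟨h.1, h.2.symm⟩
    · exact h
    · exact h
    · exact ⟨h.1.symm, h.2.1.symm, h.2.2.symm⟩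
  loopless := by
    constructor
    rintro (u | p) h
    · exact G.irrefl h.2
    · obtain ⟨-, -, h | h⟩ := h <;> omega

/-- For a finite simple graph `G = (V, E)`, an integer `x ≥ 0`, and any
independent set `I°` of the subdivided graph `G^x`, the graph `G` has an independent
set `I` with `|I| ≥ |I°| - x·|E|`. -/
theorem stmt_7 {V : Type} [Fintype V] [LinearOrder V] (G : SimpleGraph V) (x : ℕ)
    (I0 : Finset (SubVert G x))
    (hI0 : ∀ u ∈ I0, ∀ v ∈ I0, ¬(Subdiv G x).Adj u v) :
    ∃ I : Finset V, (∀ u ∈ I, ∀ v ∈ I, ¬G.Adj u v) ∧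
      (I0.card : ℤ) - x * Nat.card G.edgeSet ≤ I.card := by
  classical
  set E' : Finset (V × V) :=
    Finset.univ.filter (fun p => p.1 < p.2 ∧ G.Adj p.1 p.2) with hE'def
  set IV : Finset V := Finset.univ.filter (fun u => (Sum.inl u : SubVert G x) ∈ I0) with hIVdef
  set T : Finset {p : V × V × Fin (2 * x) // p.1 < p.2.1 ∧ G.Adj p.1 p.2.1} :=
    Finset.univ.filter (fun q => (Sum.inr q : SubVert G x) ∈ I0) with hTdef
  -- splitting I0
  have hsplit : I0.card = IV.card + T.card := by
    have h1 : IV.image (Sum.inl : V → SubVert G x) = I0.filter (fun a => a.isLeft) := by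
      ext a
      cases a with
      | inl u => simp [hIVdef]
      | inr q => simp
    have h2 : T.image (Sum.inr : _ → SubVert G x) = I0.filter (fun a => ¬ a.isLeft) := by
      ext a
      cases a with
      | inl u => simp
      | inr q => simp [hTdef]
    have c1 : (I0.filter (fun a => a.isLeft)).card = IV.card := by
      rw [← h1, Finset.card_image_of_injective _ Sum.inl_injective]
    have c2 : (I0.filter (fun a => ¬ a.isLeft)).card = T.card := by
      rw [← h2, Finset.card_image_of_injective _ Sum.inr_injective]
    rw [← c1, ← c2, Finset.card_filter_add_card_filter_not]
  -- fiber map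
  have hmem : ∀ q ∈ T, ((q : {p : V × V × Fin (2 * x) // p.1 < p.2.1 ∧ G.Adj p.1 p.2.1}).1.1,
      q.1.2.1) ∈ E' := by
    intro q _
    simp only [hE'def, Finset.mem_filter, Finset.mem_univ, true_and]
    exact q.2
  have hfiber := Finset.card_eq_sum_card_fiberwise hmem
  set bad : V × V → Prop := fun e => e.1 ∈ IV ∧ e.2 ∈ IV with hbaddef
  set BAD : Finset (V × V) := E'.filter bad with hBADdef
  -- per-edge bound
  have hedge : ∀ e ∈ E',
      (T.filter (fun q => ((q : {p : V × V × Fin (2 * x) // p.1 < p.2.1 ∧ G.Adj p.1 p.2.1}).1.1,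
        q.1.2.1) = e)).card + (if bad e then 1 else 0) ≤ x := by
    intro e he
    simp only [hE'def, Finset.mem_filter, Finset.mem_univ, true_and] at he
    set F := T.filter (fun q => ((q : {p : V × V × Fin (2 * x) // p.1 < p.2.1 ∧ G.Adj p.1 p.2.1}).1.1,
        q.1.2.1) = e) with hFdef
    have hFI0 : ∀ q ∈ F, (Sum.inr q : SubVert G x) ∈ I0 ∧ q.1.1 = e.1 ∧ q.1.2.1 = e.2 := by
      intro q hq
      simp only [hFdef, hTdef, Finset.mem_filter, Finset.mem_univ, true_and, Prod.ext_iff] at hq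
      exact ⟨hq.1, hq.2.1, hq.2.2⟩
    have hnoncons : ∀ q ∈ F, ∀ q' ∈ F, q ≠ q' →
        ¬ ((q.1.2.2 : ℕ) + 1 = (q'.1.2.2 : ℕ) ∨ (q'.1.2.2 : ℕ) + 1 = (q.1.2.2 : ℕ)) := by
      intro q hq q' hq' hne habs
      obtain ⟨hqI, hq1, hq2⟩ := hFI0 q hq
      obtain ⟨hq'I, hq'1, hq'2⟩ := hFI0 q' hq'
      refine hI0 _ hqI _ hq'I ?_
      show q.1.1 = q'.1.1 ∧ q.1.2.1 = q'.1.2.1 ∧ _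
      exact ⟨hq1.trans hq'1.symm, hq2.trans hq'2.symm, habs⟩
    have hinjkey : ∀ q ∈ F, ∀ q' ∈ F, (q.1.2.2 : ℕ) = (q'.1.2.2 : ℕ) → q = q' := by
      intro q hq q' hq' hiq
      obtain ⟨_, hq1, hq2⟩ := hFI0 q hq
      obtain ⟨_, hq'1, hq'2⟩ := hFI0 q' hq'
      apply Subtype.ext
      refine Prod.ext (hq1.trans hq'1.symm) (Prod.ext (hq2.trans hq'2.symm) (Fin.ext hiq))
    by_cases hb : bad e
    · -- both endpoints in I0
      have heu : (Sum.inl e.1 : SubVert G x) ∈ I0 := by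
        have := hb.1; simpa [hIVdef] using this
      have hev : (Sum.inl e.2 : SubVert G x) ∈ I0 := by
        have := hb.2; simpa [hIVdef] using this
      have hx : 1 ≤ x := by
        by_contra hx0
        have hx0 : x = 0 := by omega
        exact hI0 _ heu _ hev ⟨hx0, he.2⟩
      have hF0 : ∀ q ∈ F, 1 ≤ (q.1.2.2 : ℕ) ∧ (q.1.2.2 : ℕ) ≤ 2 * x - 2 := by
        intro q hq
        obtain ⟨hqI, hq1, hq2⟩ := hFI0 q hq
        have hi : (q.1.2.2 : ℕ) < 2 * x := q.1.2.2.isLt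
        constructor
        · rcases Nat.eq_zero_or_pos (q.1.2.2 : ℕ) with h0 | h0
          · exact ((hI0 _ heu _ hqI) (Or.inl ⟨hq1.symm, h0⟩)).elim
          · exact h0
        · by_contra hgt
          have : (q.1.2.2 : ℕ) = 2 * x - 1 := by omega
          exact hI0 _ hev _ hqI (Or.inr ⟨hq2.symm, this⟩)
      have hcardF : F.card ≤ x - 1 := by
        have hinj : Set.InjOn (fun q : {p : V × V × Fin (2 * x) // p.1 < p.2.1 ∧ G.Adj p.1 p.2.1}
            => ((q.1.2.2 : ℕ) - 1) / 2) F := by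
          intro q hq q' hq' hEq
          by_contra hne
          have h1 := hF0 q hq
          have h2 := hF0 q' hq'
          have hne' : (q.1.2.2 : ℕ) ≠ (q'.1.2.2 : ℕ) := fun h => hne (hinjkey q hq q' hq' h)
          have := hnoncons q hq q' hq' hne
          simp only at hEq
          omega
        have hmaps : ∀ q ∈ F, ((q.1.2.2 : ℕ) - 1) / 2 ∈ Finset.range (x - 1) := by
          intro q hq
          have := hF0 q hq
          have hi : (q.1.2.2 : ℕ) < 2 * x := q.1.2.2.isLt
          simp only [Finset.mem_range]
          omega
        calc F.card ≤ (Finset.range (x - 1)).card :=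
              Finset.card_le_card_of_injOn _ hmaps hinj
          _ = x - 1 := Finset.card_range _
      simp only [if_pos hb]
      omega
    · have hcardF : F.card ≤ x := by
        have hinj : Set.InjOn (fun q : {p : V × V × Fin (2 * x) // p.1 < p.2.1 ∧ G.Adj p.1 p.2.1}
            => (q.1.2.2 : ℕ) / 2) F := by
          intro q hq q' hq' hEq
          by_contra hne
          have hne' : (q.1.2.2 : ℕ) ≠ (q'.1.2.2 : ℕ) := fun h => hne (hinjkey q hq q' hq' h)
          have := hnoncons q hq q' hq' hne
          simp only at hEq
          omega
        have hmaps : ∀ q ∈ F, (q.1.2.2 : ℕ) / 2 ∈ Finset.range x := by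
          intro q hq
          have hi : (q.1.2.2 : ℕ) < 2 * x := q.1.2.2.isLt
          simp only [Finset.mem_range]
          omega
        calc F.card ≤ (Finset.range x).card :=
              Finset.card_le_card_of_injOn _ hmaps hinj
          _ = x := Finset.card_range _
      simp only [if_neg hb]
      omega
  -- sum the per-edge bounds
  have hTB : T.card + BAD.card ≤ x * E'.card := by
    have hBcard : BAD.card = ∑ e ∈ E', (if bad e then 1 else 0) := Finset.card_filter _ _
    calc T.card + BAD.card
        = ∑ e ∈ E', ((T.filter (fun q =>
            ((q : {p : V × V × Fin (2 * x) // p.1 < p.2.1 ∧ G.Adj p.1 p.2.1}).1.1,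
              q.1.2.1) = e)).card + (if bad e then 1 else 0)) := by
          rw [Finset.sum_add_distrib, ← hfiber, ← hBcard]
      _ ≤ ∑ _e ∈ E', x := Finset.sum_le_sum hedge
      _ = x * E'.card := by rw [Finset.sum_const, smul_eq_mul, Nat.mul_comm]
  -- the independent set
  set I : Finset V := IV.filter (fun u => ∀ v ∈ IV, G.Adj v u → u < v) with hIdef
  have hind : ∀ u ∈ I, ∀ v ∈ I, ¬G.Adj u v := by
    intro u hu v hv hadj
    simp only [hIdef, Finset.mem_filter] at hu hv
    have h1 := hu.2 v hv.1 hadj.symm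
    have h2 := hv.2 u hu.1 hadj
    exact absurd (h1.trans h2) (lt_irrefl u)
  set R : Finset V := IV.filter (fun u => ¬ ∀ v ∈ IV, G.Adj v u → u < v) with hRdef
  have hIVsplit : IV.card = I.card + R.card :=
    (Finset.card_filter_add_card_filter_not _).symm
  have hRB : R.card ≤ BAD.card := by
    have cond : ∀ u ∈ R, ∃ v, v ∈ IV ∧ G.Adj v u ∧ v < u := by
      intro u hu
      simp only [hRdef, Finset.mem_filter] at hu
      obtain ⟨huIV, hu2⟩ := hu
      push_neg at hu2
      obtain ⟨v, hvIV, hadj, hle⟩ := hu2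
      refine ⟨v, hvIV, hadj, lt_of_le_of_ne hle (fun h => G.irrefl (v := u) (h ▸ hadj))⟩
    set f : V → V × V := fun u =>
      if h : ∃ v, v ∈ IV ∧ G.Adj v u ∧ v < u then (h.choose, u) else (u, u) with hfdef
    have hmapsto : ∀ u ∈ R, f u ∈ BAD := by
      intro u hu
      have h := cond u hu
      have hspec := h.choose_spec
      simp only [hfdef, dif_pos h, hBADdef, hE'def, hbaddef, Finset.mem_filter,
        Finset.mem_univ, true_and]
      refine ⟨⟨hspec.2.2, hspec.2.1⟩, hspec.1, ?_⟩
      simp only [hRdef, Finset.mem_filter] at hu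
      exact hu.1
    have hinjf : Set.InjOn f R := by
      intro u hu u' hu' hEq
      have h := cond u (by simpa using hu)
      have h' := cond u' (by simpa using hu')
      simp only [hfdef, dif_pos h, dif_pos h', Prod.ext_iff] at hEq
      exact hEq.2
    exact Finset.card_le_card_of_injOn f hmapsto hinjf
  -- |E'| ≤ Nat.card edgeSet
  have hEcard : E'.card ≤ Nat.card G.edgeSet := by
    have hinj : Set.InjOn (fun p : V × V => s(p.1, p.2)) E' := by
      intro p hp q hq hEq
      simp only [hE'def, Finset.mem_coe, Finset.mem_filter, Finset.mem_univ, true_and] at hp hq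
      rw [Sym2.eq_iff] at hEq
      rcases hEq with ⟨h1, h2⟩ | ⟨h1, h2⟩
      · exact Prod.ext h1 h2
      · exfalso
        have h3 : p.1 < q.1 := by rw [← h2]; exact hp.1
        have h4 : q.1 < p.1 := by rw [h1]; exact hq.1
        exact absurd (h3.trans h4) (lt_irrefl _)
    have hsub : E'.image (fun p : V × V => s(p.1, p.2)) ⊆ G.edgeFinset := by
      intro e he
      simp only [Finset.mem_image] at he
      obtain ⟨p, hp, rfl⟩ := he
      simp only [hE'def, Finset.mem_filter, Finset.mem_univ, true_and] at hp
      rw [SimpleGraph.mem_edgeFinset]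
      exact hp.2
    calc E'.card = (E'.image (fun p : V × V => s(p.1, p.2))).card :=
          (Finset.card_image_of_injOn hinj).symm
      _ ≤ G.edgeFinset.card := Finset.card_le_card hsub
      _ = Nat.card G.edgeSet := by
          rw [Nat.card_eq_fintype_card, SimpleGraph.edgeFinset, Set.toFinset_card]
  refine ⟨I, hind, ?_⟩
  have hmul : (x : ℤ) * E'.card ≤ (x : ℤ) * Nat.card G.edgeSet := by
    have := Nat.mul_le_mul_left x hEcard
    exact_mod_cast this
  have h1 : (T.card : ℤ) + BAD.card ≤ (x : ℤ) * E'.card := by exact_mod_cast hTB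
  have h2 : (R.card : ℤ) ≤ BAD.card := by exact_mod_cast hRB
  have h3 : (I0.card : ℤ) = IV.card + T.card := by exact_mod_cast hsplit
  have h4 : (IV.card : ℤ) = I.card + R.card := by exact_mod_cast hIVsplit
  linarith
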